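/- Let M be a finite p-group which is an A_t-group with |M'| = p, and let G = M * A be a central product where A is an abelian group of order p^{k+1} with M ∩ A = M'. Then G is an A_{t+k}-group. -/

import Mathlib

/-- `G` is a minimal non-abelian group: non-abelian, but all proper subgroups abelian. -/
def IsMinimalNonabelian (G : Type*) [Group G] : Prop :=
  (¬ ∀ a b : G, a * b = b * a) ∧
    ∀ H : Subgroup G, H ≠ ⊤ → ∀ a ∈ H, ∀ b ∈ H, a * b = b * a

/-- `G` is an `𝒜_t`-group: it has a non-abelian subgroup of index `p ^ (t-1)`,
but all subgroups of index `p ^ t` are abelian. -/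
def IsAGroup (p t : ℕ) (G : Type*) [Group G] : Prop :=
  (∃ H : Subgroup G, H.index = p ^ (t - 1) ∧ ¬ ∀ a ∈ H, ∀ b ∈ H, a * b = b * a) ∧
    ∀ H : Subgroup G, H.index = p ^ t → ∀ a ∈ H, ∀ b ∈ H, a * b = b * a

open scoped Pointwise in
private lemma aux_card {G : Type*} [Group G] (X Y : Subgroup G) :
    Nat.card (X ⊓ Y : Subgroup G) * X.relIndex Y = Nat.card Y := by
  have h1 : Nat.card ((X ⊓ Y).subgroupOf Y) = Nat.card (X ⊓ Y : Subgroup G) :=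
    Nat.card_congr (Subgroup.subgroupOfEquivOfLe inf_le_right).toEquiv
  have h2 : X.relIndex Y = ((X ⊓ Y).subgroupOf Y).index := by
    rw [← Subgroup.inf_relIndex_right]; rfl
  rw [h2, ← h1]
  exact Subgroup.card_mul_index ((X ⊓ Y).subgroupOf Y)

open scoped Pointwise commutatorElement in
theorem stmt9 {p t k : ℕ} (hp : p.Prime) (ht : 0 < t)
    {G : Type*} [Group G] [Finite G] (hG : IsPGroup p G)
    {M A : Subgroup G} (hMt : IsAGroup p t ↥M)
    (hM' : Nat.card (commutator ↥M) = p)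
    (hA : ∀ a ∈ A, ∀ b ∈ A, a * b = b * a) (hAcard : Nat.card A = p ^ (k + 1))
    (hjoin : M ⊔ A = ⊤) (hcomm : ∀ m ∈ M, ∀ a ∈ A, m * a = a * m)
    (hint : M ⊓ A = (commutator ↥M).map M.subtype) :
    IsAGroup p (t + k) G := by
  haveI hpf : Fact p.Prime := ⟨hp⟩
  have hcentral : ∀ x ∈ A, ∀ g : G, x * g = g * x := by
    intro x hx g
    have hle : M ⊔ A ≤ Subgroup.centralizer {x} := by
      apply sup_le
      · intro m hm
        rw [Subgroup.mem_centralizer_iff]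
        intro h hh
        have hhx : h = x := hh
        rw [hhx]
        exact (hcomm m hm x hx).symm
      · intro a' ha'
        rw [Subgroup.mem_centralizer_iff]
        intro h hh
        have hhx : h = x := hh
        rw [hhx]
        exact hA x hx a' ha'
    have hg : g ∈ Subgroup.centralizer {x} := hle (hjoin ▸ Subgroup.mem_top g)
    exact Subgroup.mem_centralizer_iff.mp hg x rfl
  haveI hAnormal : A.Normal := by
    constructor
    intro x hx g
    have h : g * x * g⁻¹ = x := by rw [← hcentral x hx g]; group
    rw [h]; exact hx
  have hdecomp : ∀ g : G, ∃ m ∈ M, ∃ y ∈ A, m * y = g := by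
    intro g
    have hg : g ∈ ((M : Set G) * (A : Set G)) := by
      rw [← Subgroup.mul_normal M A]
      have : g ∈ (⊤ : Subgroup G) := Subgroup.mem_top g
      rw [← hjoin] at this
      exact this
    exact Set.mem_mul.mp hg
  haveI hMnormal : M.Normal := by
    constructor
    intro x hx g
    obtain ⟨m, hm, y, hy, rfl⟩ := hdecomp g
    have h1 : y * x = x * y := hcentral y hy x
    have h2 : (m * y) * x * (m * y)⁻¹ = m * x * m⁻¹ := by
      calc (m * y) * x * (m * y)⁻¹ = m * (y * x) * (m * y)⁻¹ := by group
        _ = m * (x * y) * (m * y)⁻¹ := by rw [h1]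
        _ = m * x * m⁻¹ := by group
    rw [h2]; exact M.mul_mem (M.mul_mem hm hx) (M.inv_mem hm)
  have hMM : (⁅M, M⁆ : Subgroup G) = M ⊓ A := by
    rw [hint, commutator_def, Subgroup.map_commutator, ← MonoidHom.range_eq_map,
      Subgroup.range_subtype]
  have hMAcard : Nat.card (M ⊓ A : Subgroup G) = p := by
    rw [hint, ← hM']
    exact (Nat.card_congr (Subgroup.equivMapOfInjective _ _ M.subtype_injective).toEquiv).symm
  have hMidx : M.index = p ^ k := by
    have h1 := aux_card M A
    have h2 : M.relIndex A = M.index := by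
      rw [← Subgroup.relIndex_sup_right A M, sup_comm A M, hjoin, Subgroup.relIndex_top_right]
    rw [h2, hMAcard, hAcard, pow_succ'] at h1
    exact Nat.eq_of_mul_eq_mul_left hp.pos h1
  constructor
  · obtain ⟨K0, hK0idx, hK0na⟩ := hMt.1
    refine ⟨K0.map M.subtype, ?_, ?_⟩
    · rw [Subgroup.index_map_subtype, hK0idx, hMidx, ← pow_add]
      congr 1; omega
    · intro hcon
      apply hK0na
      intro x hx y hy
      exact Subtype.ext
        (hcon ↑x (Subgroup.mem_map_of_mem M.subtype hx)
          ↑y (Subgroup.mem_map_of_mem M.subtype hy))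
  · intro H hHidx a haH b hbH
    by_contra hab
    obtain ⟨m₁, hm₁M, a₁, ha₁A, hab1⟩ := hdecomp a
    obtain ⟨m₂, hm₂M, a₂, ha₂A, hab2⟩ := hdecomp b
    have key : ∀ (m n x y : G), x ∈ A → (m * x) * (n * y) = (m * n) * (x * y) := by
      intro m n x y hx
      calc (m * x) * (n * y) = m * (x * n) * y := by group
        _ = m * (n * x) * y := by rw [hcentral x hx n]
        _ = (m * n) * (x * y) := by group
    have hmne : m₁ * m₂ ≠ m₂ * m₁ := by
      intro hme
      apply hab
      rw [← hab1, ← hab2, key _ _ _ _ ha₁A, key _ _ _ _ ha₂A, hme, hA a₂ ha₂A a₁ ha₁A]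
    set N : Subgroup G := H ⊔ A with hN
    set K : Subgroup G := M ⊓ N with hK
    have hAN : A ≤ N := by rw [hN]; exact le_sup_right
    have hm₁N : m₁ ∈ N := by
      have h : m₁ = a * a₁⁻¹ := by rw [← hab1]; group
      rw [h]
      exact N.mul_mem (Subgroup.mem_sup_left haH) (N.inv_mem (Subgroup.mem_sup_right ha₁A))
    have hm₂N : m₂ ∈ N := by
      have h : m₂ = b * a₂⁻¹ := by rw [← hab2]; group
      rw [h]
      exact N.mul_mem (Subgroup.mem_sup_left hbH) (N.inv_mem (Subgroup.mem_sup_right ha₂A))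
    have hm₁K : m₁ ∈ K := ⟨hm₁M, hm₁N⟩
    have hm₂K : m₂ ∈ K := ⟨hm₂M, hm₂N⟩
    set c : G := ⁅a, b⁆ with hc
    have hcne : c ≠ 1 := fun h => hab (commutatorElement_eq_one_iff_mul_comm.mp h)
    have hcH : c ∈ H := by
      rw [hc, commutatorElement_def]
      exact H.mul_mem (H.mul_mem (H.mul_mem haH hbH) (H.inv_mem haH)) (H.inv_mem hbH)
    have hm12A : ⁅m₁, m₂⁆ ∈ A := by
      have h : ⁅m₁, m₂⁆ ∈ (⁅M, M⁆ : Subgroup G) :=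
        Subgroup.commutator_mem_commutator hm₁M hm₂M
      rw [hMM] at h; exact h.2
    have hcA : c ∈ A := by
      have h1 : (QuotientGroup.mk' A) c = 1 := by
        have e1 : (QuotientGroup.mk' A) a = (QuotientGroup.mk' A) m₁ := by
          rw [← hab1, map_mul,
            show (QuotientGroup.mk' A) a₁ = 1 from (QuotientGroup.eq_one_iff a₁).mpr ha₁A,
            mul_one]
        have e2 : (QuotientGroup.mk' A) b = (QuotientGroup.mk' A) m₂ := by
          rw [← hab2, map_mul,
            show (QuotientGroup.mk' A) a₂ = 1 from (QuotientGroup.eq_one_iff a₂).mpr ha₂A,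
            mul_one]
        rw [hc, map_commutatorElement, e1, e2, ← map_commutatorElement]
        exact (QuotientGroup.eq_one_iff _).mpr hm12A
      exact (QuotientGroup.eq_one_iff c).mp h1
    have hcM : c ∈ M := by
      have h1 : (QuotientGroup.mk' M) c = 1 := by
        have e1 : (QuotientGroup.mk' M) a = (QuotientGroup.mk' M) a₁ := by
          rw [← hab1, map_mul,
            show (QuotientGroup.mk' M) m₁ = 1 from (QuotientGroup.eq_one_iff m₁).mpr hm₁M,
            one_mul]
        have e2 : (QuotientGroup.mk' M) b = (QuotientGroup.mk' M) a₂ := by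
          rw [← hab2, map_mul,
            show (QuotientGroup.mk' M) m₂ = 1 from (QuotientGroup.eq_one_iff m₂).mpr hm₂M,
            one_mul]
        rw [hc, map_commutatorElement, e1, e2, ← map_commutatorElement,
          commutatorElement_eq_one_iff_mul_comm.mpr (hA a₁ ha₁A a₂ ha₂A), map_one]
      exact (QuotientGroup.eq_one_iff c).mp h1
    have hPH : M ⊓ A ≤ H := by
      have hzle : Subgroup.zpowers c ≤ M ⊓ A := Subgroup.zpowers_le.mpr ⟨hcM, hcA⟩
      have hdv : Nat.card (Subgroup.zpowers c) ∣ p := by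
        rw [← hMAcard]; exact Subgroup.card_dvd_of_le hzle
      have hne1 : Nat.card (Subgroup.zpowers c) ≠ 1 := by
        rw [Nat.card_zpowers]
        exact fun h => hcne (orderOf_eq_one_iff.mp h)
      have hcard : Nat.card (Subgroup.zpowers c) = p :=
        (hp.eq_one_or_self_of_dvd _ hdv).resolve_left hne1
      have heq : Subgroup.zpowers c = M ⊓ A :=
        Subgroup.eq_of_le_of_card_ge hzle (by rw [hcard, hMAcard])
      rw [← heq]; exact Subgroup.zpowers_le.mpr hcH
    obtain ⟨mm, hmm⟩ := (hG.to_subgroup M).exists_card_eq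
    have hdvdM : (K.subgroupOf M).index ∣ Nat.card ↥M :=
      Subgroup.index_dvd_card (K.subgroupOf M)
    obtain ⟨s, hsmm, hs_eq⟩ := (Nat.dvd_prime_pow hp).mp (hmm ▸ hdvdM)
    have hst : s < t := by
      by_contra hts
      push_neg at hts
      have hKcard' : Nat.card (K.subgroupOf M) = p ^ (mm - s) := by
        have h1 : Nat.card (K.subgroupOf M) * (K.subgroupOf M).index = p ^ mm := by
          rw [Subgroup.card_mul_index, hmm]
        rw [hs_eq] at h1
        have h2 : p ^ (mm - s) * p ^ s = p ^ mm := by rw [← pow_add]; congr 1; omega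
        exact Nat.eq_of_mul_eq_mul_right (pow_pos hp.pos s) (h1.trans h2.symm)
      obtain ⟨L, hLcard, hKL⟩ := Sylow.exists_subgroup_card_pow_prime_le (G := ↥M) p
        (show p ^ (mm - t) ∣ Nat.card ↥M by rw [hmm]; exact pow_dvd_pow p (by omega))
        (K.subgroupOf M) hKcard' (by omega)
      have htmm : t ≤ mm := le_trans hts hsmm
      have hLidx : L.index = p ^ t := by
        have h1 : Nat.card L * L.index = p ^ mm := by
          rw [Subgroup.card_mul_index, hmm]
        rw [hLcard] at h1
        have h2 : p ^ (mm - t) * p ^ t = p ^ mm := by rw [← pow_add]; congr 1; omega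
        exact Nat.eq_of_mul_eq_mul_left (pow_pos hp.pos _) (h1.trans h2.symm)
      have habL := hMt.2 L hLidx
      have h1 : (⟨m₁, hm₁M⟩ : ↥M) ∈ K.subgroupOf M := Subgroup.mem_subgroupOf.mpr hm₁K
      have h2 : (⟨m₂, hm₂M⟩ : ↥M) ∈ K.subgroupOf M := Subgroup.mem_subgroupOf.mpr hm₂K
      have hcomm12 := habL _ (hKL h1) _ (hKL h2)
      exact hmne (congrArg Subtype.val hcomm12)
    have hq := aux_card A H
    have hHpos : 0 < Nat.card ↥H := Nat.card_pos
    have hqpos : 0 < A.relIndex H := by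
      rcases Nat.eq_zero_or_pos (A.relIndex H) with h | h
      · rw [h, mul_zero] at hq; omega
      · exact h
    have hple : p ≤ Nat.card (A ⊓ H : Subgroup G) := by
      apply Nat.le_of_dvd Nat.card_pos
      rw [← hMAcard]
      exact Subgroup.card_dvd_of_le (le_inf inf_le_right hPH)
    have hNcard : Nat.card ↥N = p ^ (k + 1) * A.relIndex H := by
      have h1 := aux_card A N
      have h2 : A ⊓ N = A := inf_eq_left.mpr hAN
      have h3 : A.relIndex N = A.relIndex H := by
        rw [hN]; exact Subgroup.relIndex_sup_right H A
      rw [h2, h3, hAcard] at h1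
      exact h1.symm
    have hsupN : N ⊔ M = ⊤ := by
      rw [← top_le_iff, ← hjoin]
      exact sup_le le_sup_right (le_trans hAN le_sup_left)
    have hKN : Nat.card ↥K * p ^ k = Nat.card ↥N := by
      have h1 := aux_card M N
      have h2 : M.relIndex N = p ^ k := by
        rw [← Subgroup.relIndex_sup_right N M, hsupN,
          Subgroup.relIndex_top_right, hMidx]
      rw [h2, ← hK] at h1
      exact h1
    have hKM : Nat.card ↥K * p ^ s = Nat.card ↥M := by
      have h1 := aux_card K M
      have h2 : K ⊓ M = K := inf_eq_left.mpr (by rw [hK]; exact inf_le_left)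
      have h3 : K.relIndex M = p ^ s := hs_eq
      rw [h2, h3] at h1
      exact h1
    have hMG : Nat.card ↥M * p ^ k = Nat.card G := by
      rw [← hMidx]; exact M.card_mul_index
    have hHG : Nat.card ↥H * p ^ (t + k) = Nat.card G := by
      rw [← hHidx]; exact H.card_mul_index
    have e1 : Nat.card ↥N * p ^ s = Nat.card G := by
      calc Nat.card ↥N * p ^ s = (Nat.card ↥K * p ^ s) * p ^ k := by rw [← hKN]; ring
        _ = Nat.card ↥M * p ^ k := by rw [hKM]
        _ = Nat.card G := hMG
    have e2 : p ^ (k + 1) * A.relIndex H * p ^ s = Nat.card ↥H * p ^ (t + k) := by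
      rw [← hNcard, e1, hHG]
    have e3 : p * A.relIndex H ≤ Nat.card ↥H := by
      calc p * A.relIndex H ≤ Nat.card (A ⊓ H : Subgroup G) * A.relIndex H :=
            Nat.mul_le_mul_right _ hple
        _ = Nat.card ↥H := hq
    have e4 : A.relIndex H * p ^ (t + k + 1) ≤ A.relIndex H * p ^ (k + 1 + s) := by
      calc A.relIndex H * p ^ (t + k + 1) = (p * A.relIndex H) * p ^ (t + k) := by
            rw [pow_succ]; ring
        _ ≤ Nat.card ↥H * p ^ (t + k) := Nat.mul_le_mul_right _ e3
        _ = p ^ (k + 1) * A.relIndex H * p ^ s := e2.symm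
        _ = A.relIndex H * p ^ (k + 1 + s) := by rw [pow_add, pow_add]; ring
    have e5 : p ^ (t + k + 1) ≤ p ^ (k + 1 + s) := Nat.le_of_mul_le_mul_left e4 hqpos
    have e6 : t + k + 1 ≤ k + 1 + s := (Nat.pow_le_pow_iff_right hp.one_lt).mp e5
    omega
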